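/- arXiv:1207.6432 — 3 statements merged into one kernel-verified Lean document; each statement's English description precedes it below -/
import Mathlib

section
/- Let {Y_n}_{n≥0} be a strictly stationary real-valued process whose shift transformation is ergodic, with common marginal distribution function F_V that is absolutely continuous with continuous density f_V satisfying 0 < f_V(ξ_q) < ∞. Then with probability 1 the sample quantile converges: ξ̂_{n,q} → ξ_q as n → ∞. -/
/- STATEMENT 0: strong consistency of the sample quantile for a strictly
stationary ergodic real-valued process. -/

open MeasureTheory Filter Topology

set_option linter.unusedSectionVars false
set_option maxHeartbeats 1000000



section SeqHelpers

private lemma real_le_of_forall_pos_le_add {a b : ℝ} (h : ∀ ε : ℝ, 0 < ε → a ≤ b + ε) : a ≤ b := by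
  by_contra hc
  push_neg at hc
  have := h ((a - b) / 2) (by linarith)
  linarith

private lemma bddAbove_seq {u : ℕ → ℝ} {C : ℝ} (h : ∀ n, |u n| ≤ C) :
    Filter.atTop.IsBoundedUnder (· ≤ ·) u :=
  isBoundedUnder_of ⟨C, fun n => (abs_le.1 (h n)).2⟩

private lemma cobdd_seq {u : ℕ → ℝ} {C : ℝ} (h : ∀ n, |u n| ≤ C) :
    Filter.atTop.IsCoboundedUnder (· ≤ ·) u :=
  (isBoundedUnder_of ⟨-C, fun n => (abs_le.1 (h n)).1⟩ :
    Filter.atTop.IsBoundedUnder (· ≥ ·) u).isCoboundedUnder_le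

private lemma limsup_le_of_tendsto_sub {u v : ℕ → ℝ} {C : ℝ}
    (hu : ∀ n, |u n| ≤ C) (hv : ∀ n, |v n| ≤ C)
    (h : Tendsto (fun n => u n - v n) atTop (𝓝 0)) :
    limsup u atTop ≤ limsup v atTop := by
  refine real_le_of_forall_pos_le_add fun ε hε => ?_
  have hev : ∀ᶠ n in atTop, u n ≤ v n + ε := by
    have := (NormedAddCommGroup.tendsto_nhds_zero.mp h) ε hε
    filter_upwards [this] with n hn
    have : |u n - v n| < ε := by simpa [Real.norm_eq_abs] using hn
    linarith [abs_lt.1 this]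
  calc limsup u atTop ≤ limsup (fun n => v n + ε) atTop :=
        limsup_le_limsup hev (cobdd_seq hu) (isBoundedUnder_of ⟨C + ε, fun n => by
          have := (abs_le.1 (hv n)).2; linarith⟩)
    _ = limsup v atTop + ε := limsup_add_const _ _ _ (bddAbove_seq hv) (cobdd_seq hv)

private lemma limsup_eq_of_tendsto_sub {u v : ℕ → ℝ} {C : ℝ}
    (hu : ∀ n, |u n| ≤ C) (hv : ∀ n, |v n| ≤ C)
    (h : Tendsto (fun n => u n - v n) atTop (𝓝 0)) :
    limsup u atTop = limsup v atTop :=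
  le_antisymm (limsup_le_of_tendsto_sub hu hv h)
    (limsup_le_of_tendsto_sub hv hu (by simpa using h.neg))

end SeqHelpers

section Birkhoff

variable {Ω : Type*} [MeasurableSpace Ω]

/-- Birkhoff sums. -/
noncomputable def bS (T : Ω → Ω) (g : Ω → ℝ) (n : ℕ) (ω : Ω) : ℝ :=
  ∑ i ∈ Finset.range n, g (T^[i] ω)

/-- Running maxima of Birkhoff sums (including the empty sum `0`). -/
noncomputable def bM (T : Ω → Ω) (g : Ω → ℝ) : ℕ → Ω → ℝ
  | 0, _ => 0
  | (N + 1), ω => max (bM T g N ω) (bS T g (N + 1) ω)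

variable {T : Ω → Ω} {g : Ω → ℝ}

lemma bS_zero (ω : Ω) : bS T g 0 ω = 0 := by simp [bS]

lemma bS_succ' (n : ℕ) (ω : Ω) : bS T g (n + 1) ω = g ω + bS T g n (T ω) := by
  unfold bS
  rw [Finset.sum_range_succ']
  simp [Function.iterate_succ_apply, add_comm]

lemma bS_succ (n : ℕ) (ω : Ω) : bS T g (n + 1) ω = bS T g n ω + g (T^[n] ω) := by
  unfold bS; rw [Finset.sum_range_succ]

lemma measurable_bS (hT : Measurable T) (hg : Measurable g) (n : ℕ) :
    Measurable (bS T g n) :=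
  Finset.measurable_sum _ fun i _ => hg.comp (hT.iterate i)

lemma abs_bS_le {C : ℝ} (hb : ∀ ω, |g ω| ≤ C) (n : ℕ) (ω : Ω) :
    |bS T g n ω| ≤ n * C := by
  calc |bS T g n ω| ≤ ∑ i ∈ Finset.range n, |g (T^[i] ω)| := Finset.abs_sum_le_sum_abs _ _
    _ ≤ ∑ _i ∈ Finset.range n, C := Finset.sum_le_sum fun i _ => hb _
    _ = n * C := by simp [mul_comm]

lemma bM_nonneg (N : ℕ) (ω : Ω) : 0 ≤ bM T g N ω := by
  induction N with
  | zero => simp [bM]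
  | succ N ih => exact le_max_of_le_left ih

lemma bS_le_bM {n N : ℕ} (h : n ≤ N) (ω : Ω) : bS T g n ω ≤ bM T g N ω := by
  induction N with
  | zero => simp [Nat.le_zero.mp h, bS_zero, bM]
  | succ N ih =>
    rcases Nat.lt_or_ge n (N + 1) with h' | h'
    · exact le_max_of_le_left (ih (Nat.lt_succ_iff.mp h'))
    · have : n = N + 1 := le_antisymm h h'
      subst this
      exact le_max_right _ _

lemma bM_exists (N : ℕ) (ω : Ω) : ∃ n ≤ N, bM T g N ω = bS T g n ω := by
  induction N with
  | zero => exact ⟨0, le_rfl, by simp [bM, bS_zero]⟩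
  | succ N ih =>
    obtain ⟨n, hn, he⟩ := ih
    rcases max_cases (bM T g N ω) (bS T g (N + 1) ω) with ⟨h1, _⟩ | ⟨h1, _⟩
    · exact ⟨n, hn.trans (Nat.le_succ N), by rw [bM, h1, he]⟩
    · exact ⟨N + 1, le_rfl, by rw [bM, h1]⟩

lemma measurable_bM (hT : Measurable T) (hg : Measurable g) (N : ℕ) :
    Measurable (bM T g N) := by
  induction N with
  | zero => exact measurable_const
  | succ N ih => exact ih.max (measurable_bS hT hg (N + 1))

lemma bM_mono {ω : Ω} : Monotone fun N => bM T g N ω :=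
  monotone_nat_of_le_succ fun N => le_max_left _ _

lemma abs_bM_le {C : ℝ} (hC : 0 ≤ C) (hb : ∀ ω, |g ω| ≤ C) (N : ℕ) (ω : Ω) :
    |bM T g N ω| ≤ N * C := by
  obtain ⟨n, hn, he⟩ := bM_exists (T := T) (g := g) N ω
  rw [abs_of_nonneg (bM_nonneg N ω), he]
  calc bS T g n ω ≤ |bS T g n ω| := le_abs_self _
    _ ≤ n * C := abs_bS_le hb n ω
    _ ≤ N * C := by
        have : (n : ℝ) ≤ N := Nat.cast_le.mpr hn
        nlinarith

lemma bM_pos_le {N : ℕ} {ω : Ω} (h : 0 < bM T g N ω) :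
    bM T g N ω ≤ g ω + bM T g N (T ω) := by
  obtain ⟨n, hn, he⟩ := bM_exists (T := T) (g := g) N ω
  match n, hn, he with
  | 0, _, he => rw [he, bS_zero] at h; exact absurd h (lt_irrefl 0)
  | (m + 1), hm, he =>
    rw [he, bS_succ']
    have : bS T g m (T ω) ≤ bM T g N (T ω) := bS_le_bM (Nat.le_of_succ_le hm) (T ω)
    linarith

lemma integrable_of_bounded' {P : Measure Ω} [IsFiniteMeasure P] {f : Ω → ℝ} {c : ℝ}
    (hf : Measurable f) (hb : ∀ ω, |f ω| ≤ c) : Integrable f P :=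
  ⟨hf.aestronglyMeasurable,
    HasFiniteIntegral.of_bounded (C := c) (ae_of_all _ fun ω => by
      simpa [Real.norm_eq_abs] using hb ω)⟩

/-- **Maximal ergodic lemma**. -/
lemma maximal_ergodic {P : Measure Ω} [IsProbabilityMeasure P]
    (hT : MeasurePreserving T P P) (hg : Measurable g) {C : ℝ} (hC : 0 ≤ C)
    (hb : ∀ ω, |g ω| ≤ C) (N : ℕ) :
    0 ≤ ∫ ω in {ω | 0 < bM T g N ω}, g ω ∂P := by
  set E := {ω | 0 < bM T g N ω} with hE
  have hTm : Measurable T := hT.measurable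
  have hMm : Measurable (bM T g N) := measurable_bM hTm hg N
  have hEm : MeasurableSet E := measurableSet_lt measurable_const hMm
  have hMi : Integrable (bM T g N) P := integrable_of_bounded' hMm (abs_bM_le hC hb N)
  have hMTi : Integrable (fun ω => bM T g N (T ω)) P :=
    integrable_of_bounded' (hMm.comp hTm) (fun ω => abs_bM_le hC hb N (T ω))
  have hgi : Integrable g P := integrable_of_bounded' hg hb
  have key : ∀ ω ∈ E, bM T g N ω - bM T g N (T ω) ≤ g ω := by
    intro ω hω
    have := bM_pos_le (T := T) (g := g) hω
    linarith
  have h1 : ∫ ω in E, (bM T g N ω - bM T g N (T ω)) ∂P ≤ ∫ ω in E, g ω ∂P :=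
    setIntegral_mono_on ((hMi.sub hMTi).integrableOn) hgi.integrableOn hEm key
  have h5 : ∫ ω in E, (bM T g N ω - bM T g N (T ω)) ∂P
      = ∫ ω in E, bM T g N ω ∂P - ∫ ω in E, bM T g N (T ω) ∂P :=
    integral_sub hMi.integrableOn hMTi.integrableOn
  have h2 : ∫ ω in E, bM T g N ω ∂P = ∫ ω, bM T g N ω ∂P := by
    rw [← integral_indicator hEm]
    congr 1
    funext ω
    by_cases hω : ω ∈ E
    · simp [Set.indicator_of_mem hω]
    · have h0 : bM T g N ω = 0 :=
        le_antisymm (not_lt.mp hω) (bM_nonneg N ω)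
      simp [Set.indicator_of_notMem hω, h0]
  have h3 : ∫ ω in E, bM T g N (T ω) ∂P ≤ ∫ ω, bM T g N (T ω) ∂P :=
    setIntegral_le_integral hMTi (ae_of_all _ fun ω => bM_nonneg N (T ω))
  have h4 : ∫ ω, bM T g N (T ω) ∂P = ∫ ω, bM T g N ω ∂P := by
    rw [← integral_map hTm.aemeasurable hMm.aestronglyMeasurable, hT.map_eq]
  linarith

lemma abs_bS_div_le {C : ℝ} (hC : 0 ≤ C) (hb : ∀ ω, |g ω| ≤ C) (ω : Ω) (n : ℕ) :
    |bS T g n ω / n| ≤ C := by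
  rcases Nat.eq_zero_or_pos n with h | h
  · simp [h, hC]
  · have hn : (0:ℝ) < n := by exact_mod_cast h
    rw [abs_div, abs_of_pos hn, div_le_iff₀ hn]
    calc |bS T g n ω| ≤ n * C := abs_bS_le hb n ω
      _ = C * n := mul_comm _ _

/-- Half of Birkhoff's theorem: a.e. bound on the limsup of the Birkhoff averages. -/
lemma halfBirkhoff {P : Measure Ω} [IsProbabilityMeasure P]
    (hT : Ergodic T P) (hg : Measurable g) {C : ℝ} (hC : 0 ≤ C) (hb : ∀ ω, |g ω| ≤ C)
    {α : ℝ} (hα : ∫ ω, g ω ∂P < α) :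
    ∀ᵐ ω ∂P, limsup (fun n => bS T g n ω / n) atTop ≤ α := by
  have hTm : Measurable T := hT.toMeasurePreserving.measurable
  have hgi : Integrable g P := integrable_of_bounded' hg hb
  set u : Ω → ℕ → ℝ := fun ω n => bS T g n ω / n with hu
  have hub : ∀ ω n, |u ω n| ≤ C := fun ω n => abs_bS_div_le hC hb ω n
  set L : Ω → ℝ := fun ω => limsup (u ω) atTop with hL
  have hLm : Measurable L :=
    Measurable.limsup fun n => (measurable_bS hTm hg n).div_const _
  have hLinv : ∀ ω, L (T ω) = L ω := by
    intro ω
    refine limsup_eq_of_tendsto_sub (hub (T ω)) (hub ω) ?_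
    have heq : ∀ n : ℕ, u (T ω) n - u ω n = (g (T^[n] ω) - g ω) / n := by
      intro n
      have h3 : bS T g n (T ω) - bS T g n ω = g (T^[n] ω) - g ω := by
        have h1 := bS_succ' (T := T) (g := g) n ω
        have h2 := bS_succ (T := T) (g := g) n ω
        linarith
      simp only [hu]
      rw [div_sub_div_same, h3]
    simp only [heq]
    apply squeeze_zero_norm ?_ (tendsto_const_div_atTop_nhds_zero_nat (2 * C))
    · intro n
      rcases Nat.eq_zero_or_pos n with h | h
      · simp [h]
      · have hn : (0:ℝ) < n := by exact_mod_cast h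
        rw [Real.norm_eq_abs, abs_div, abs_of_pos hn, div_le_div_iff₀ hn hn]
        have h4 : |g (T^[n] ω) - g ω| ≤ 2 * C := by
          calc |g (T^[n] ω) - g ω| ≤ |g (T^[n] ω)| + |g ω| := abs_sub _ _
            _ ≤ 2 * C := by linarith [hb (T^[n] ω), hb ω]
        nlinarith
  set A : Set Ω := {ω | α < L ω} with hA
  have hAm : MeasurableSet A := measurableSet_lt measurable_const hLm
  have hAinv : T ⁻¹' A = A := Set.ext fun ω => by
    simp only [hA, Set.mem_preimage, Set.mem_setOf_eq, hLinv ω]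
  rcases hT.ae_empty_or_univ hAm hAinv with h | h
  · have hnull : P A = 0 := by
      have := measure_congr h
      simpa using this
    have hae : ∀ᵐ ω ∂P, ω ∉ A := by
      rw [ae_iff]
      simpa using hnull
    filter_upwards [hae] with ω hω
    exact not_lt.mp hω
  · exfalso
    set g2 : Ω → ℝ := A.indicator (fun ω => g ω - α) with hg2
    have hg2m : Measurable g2 := (hg.sub measurable_const).indicator hAm
    have hb2 : ∀ ω, |g2 ω| ≤ C + |α| := by
      intro ω
      by_cases hω : ω ∈ A
      · rw [hg2, Set.indicator_of_mem hω]
        calc |g ω - α| ≤ |g ω| + |α| := abs_sub _ _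
          _ ≤ C + |α| := by linarith [hb ω]
      · rw [hg2, Set.indicator_of_notMem hω]
        simp only [abs_zero]
        positivity
    have hC2 : (0:ℝ) ≤ C + |α| := by positivity
    have hiter : ∀ (i : ℕ) (ω : Ω), T^[i] ω ∈ A ↔ ω ∈ A := by
      intro i
      induction i with
      | zero => intro ω; simp
      | succ i ih =>
        intro ω
        rw [Function.iterate_succ_apply, ih (T ω)]
        constructor
        · intro h2; rw [← hAinv]; exact h2
        · intro h2; rw [← hAinv] at h2; exact h2
    have hbSmem : ∀ (n : ℕ) (ω : Ω), ω ∈ A → bS T g2 n ω = bS T g n ω - n * α := by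
      intro n ω hω
      unfold bS
      have hterm : ∀ i ∈ Finset.range n, g2 (T^[i] ω) = g (T^[i] ω) - α := by
        intro i _
        rw [hg2, Set.indicator_of_mem ((hiter i ω).mpr hω)]
      rw [Finset.sum_congr rfl hterm, Finset.sum_sub_distrib]
      simp [mul_comm]
    have hbSnmem : ∀ (n : ℕ) (ω : Ω), ω ∉ A → bS T g2 n ω = 0 := by
      intro n ω hω
      unfold bS
      have hterm : ∀ i ∈ Finset.range n, g2 (T^[i] ω) = 0 := by
        intro i _
        rw [hg2, Set.indicator_of_notMem (fun hc => hω ((hiter i ω).mp hc))]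
      rw [Finset.sum_congr rfl hterm]
      simp
    set E : ℕ → Set Ω := fun N => {ω | 0 < bM T g2 N ω} with hEdef
    have hEm : ∀ N, MeasurableSet (E N) :=
      fun N => measurableSet_lt measurable_const (measurable_bM hTm hg2m N)
    have hEmono : Monotone E := fun N M hNM ω hω => lt_of_lt_of_le hω (bM_mono hNM)
    have hEsub : ∀ N, E N ⊆ A := by
      intro N ω hω
      by_contra hc
      obtain ⟨n, _, he⟩ := bM_exists (T := T) (g := g2) N ω
      have hz : bM T g2 N ω = 0 := by rw [he, hbSnmem n ω hc]
      rw [hEdef] at hω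
      simp only [Set.mem_setOf_eq, hz] at hω
      exact lt_irrefl 0 hω
    have hUnion : ⋃ N, E N = A := by
      refine subset_antisymm (Set.iUnion_subset hEsub) ?_
      intro ω hω
      have hfreq : ∃ᶠ n in atTop, α < u ω n :=
        frequently_lt_of_lt_limsup (cobdd_seq (hub ω)) hω
      obtain ⟨n, hαu, hn1⟩ := (hfreq.and_eventually (eventually_ge_atTop 1)).exists
      refine Set.mem_iUnion.2 ⟨n, ?_⟩
      show 0 < bM T g2 n ω
      have hn : (0:ℝ) < n := by exact_mod_cast hn1
      have hpos : 0 < bS T g2 n ω := by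
        rw [hbSmem n ω hω]
        have hlt : α * n < bS T g n ω := by
          have h5 : α < bS T g n ω / n := hαu
          calc α * n < (bS T g n ω / n) * n := mul_lt_mul_of_pos_right h5 hn
            _ = bS T g n ω := div_mul_cancel₀ _ (ne_of_gt hn)
        nlinarith
      exact lt_of_lt_of_le hpos (bS_le_bM le_rfl ω)
    have hg2i : Integrable g2 P := integrable_of_bounded' hg2m hb2
    have h1 : ∀ N, 0 ≤ ∫ ω in E N, g2 ω ∂P :=
      fun N => maximal_ergodic hT.toMeasurePreserving hg2m hC2 hb2 N
    have h2 : Tendsto (fun N => ∫ ω in E N, g2 ω ∂P) atTop (𝓝 (∫ ω in ⋃ N, E N, g2 ω ∂P)) :=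
      tendsto_setIntegral_of_monotone hEm hEmono hg2i.integrableOn
    have h3 : 0 ≤ ∫ ω in A, g2 ω ∂P := by
      rw [← hUnion]
      exact ge_of_tendsto h2 (Eventually.of_forall h1)
    have hPA : P.restrict A = P := by
      rw [Measure.restrict_congr_set h, Measure.restrict_univ]
    have h4 : ∫ ω in A, g2 ω ∂P = ∫ ω, g ω ∂P - α := by
      have he : ∫ ω in A, g2 ω ∂P = ∫ ω in A, (g ω - α) ∂P :=
        setIntegral_congr_fun hAm fun ω hω => by rw [hg2, Set.indicator_of_mem hω]
      rw [he, hPA, integral_sub hgi (integrable_const α), integral_const]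
      simp
    linarith

/-- **Birkhoff's pointwise ergodic theorem** for bounded measurable functions
(ergodic case). -/
lemma birkhoff_bounded {P : Measure Ω} [IsProbabilityMeasure P]
    (hT : Ergodic T P) (hg : Measurable g) {C : ℝ} (hC : 0 ≤ C) (hb : ∀ ω, |g ω| ≤ C) :
    ∀ᵐ ω ∂P, Tendsto (fun n => bS T g n ω / n) atTop (𝓝 (∫ ω, g ω ∂P)) := by
  have hTm : Measurable T := hT.toMeasurePreserving.measurable
  set I := ∫ ω, g ω ∂P with hI
  have hneg : ∀ (n : ℕ) (ω : Ω), bS T (fun x => -g x) n ω = -(bS T g n ω) := by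
    intro n ω; unfold bS; simp
  have hbneg : ∀ ω, |(fun x => -g x) ω| ≤ C := fun ω => by simpa [abs_neg] using hb ω
  have hup : ∀ k : ℕ, ∀ᵐ ω ∂P, limsup (fun n => bS T g n ω / n) atTop ≤ I + 1/(k+1) :=
    fun k => halfBirkhoff hT hg hC hb (by
      rw [← hI]
      exact lt_add_of_pos_right _ (by positivity))
  have hIneg : ∫ ω, -g ω ∂P = -I := by rw [hI, integral_neg]
  have hdn : ∀ k : ℕ, ∀ᵐ ω ∂P, limsup (fun n => -(bS T g n ω) / n) atTop ≤ -I + 1/(k+1) := by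
    intro k
    have hgoal : ∫ ω, (fun x => -g x) ω ∂P < -I + 1/((k:ℝ)+1) := by
      have h7 : ∫ ω, (fun x => -g x) ω ∂P = -I := by
        show ∫ ω, -g ω ∂P = -I
        rw [hI, integral_neg]
      rw [h7]
      exact lt_add_of_pos_right _ (by positivity)
    have h6 := halfBirkhoff (g := fun x => -g x) hT hg.neg hC hbneg hgoal
    filter_upwards [h6] with ω hω
    simpa [hneg] using hω
  rw [← ae_all_iff] at hup
  rw [← ae_all_iff] at hdn
  filter_upwards [hup, hdn] with ω hω1 hω2
  set v : ℕ → ℝ := fun n => bS T g n ω / n with hv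
  have hvb : ∀ n, |v n| ≤ C := fun n => abs_bS_div_le hC hb ω n
  rw [Metric.tendsto_atTop]
  intro ε hε
  obtain ⟨k, hk⟩ := exists_nat_one_div_lt hε
  have hk' : (0:ℝ) < 1/((k:ℝ)+1) := by positivity
  have hev1 : ∀ᶠ n in atTop, v n < I + ε := by
    apply eventually_lt_of_limsup_lt (lt_of_le_of_lt (hω1 k) (by linarith)) (bddAbove_seq hvb)
  have hev2 : ∀ᶠ n in atTop, -(v n) < -I + ε := by
    have hb2 : ∀ n, |(-(bS T g n ω)) / n| ≤ C := by
      intro n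
      rw [neg_div, abs_neg]
      exact hvb n
    have := eventually_lt_of_limsup_lt
      (lt_of_le_of_lt (hω2 k) (by linarith : -I + 1/((k:ℝ)+1) < -I + ε)) (bddAbove_seq hb2)
    filter_upwards [this] with n hn
    rw [← neg_div]
    exact hn
  obtain ⟨N, hN⟩ := (hev1.and hev2).exists_forall_of_atTop
  refine ⟨N, fun n hn => ?_⟩
  obtain ⟨ha, hb'⟩ := hN n hn
  rw [Real.dist_eq, abs_sub_lt_iff]
  constructor <;> linarith

end Birkhoff

/-- Birkhoff's theorem applied to indicators of sublevel sets. -/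
lemma birkhoff_count {Ω : Type*} [MeasurableSpace Ω] {P : Measure Ω} [IsProbabilityMeasure P]
    {T : Ω → Ω} (hT : Ergodic T P) {Y : Ω → ℝ} (hY : Measurable Y) (y : ℝ) :
    ∀ᵐ ω ∂P, Tendsto (fun n : ℕ =>
        (((Finset.range n).filter (fun i => Y (T^[i] ω) ≤ y)).card : ℝ) / n)
      atTop (𝓝 ((P {ω | Y ω ≤ y}).toReal)) := by
  set s : Set Ω := {x | Y x ≤ y} with hs
  have hsm : MeasurableSet s := hY measurableSet_Iic
  set g : Ω → ℝ := s.indicator (fun _ => (1:ℝ)) with hg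
  have hgm : Measurable g := measurable_const.indicator hsm
  have hb : ∀ ω, |g ω| ≤ 1 := by
    intro ω
    by_cases h : ω ∈ s
    · simp [hg, Set.indicator_of_mem h]
    · simp [hg, Set.indicator_of_notMem h]
  have hbS : ∀ (n : ℕ) (ω : Ω), bS T g n ω =
      (((Finset.range n).filter (fun i => Y (T^[i] ω) ≤ y)).card : ℝ) := by
    intro n ω
    unfold bS
    rw [Finset.card_filter]
    push_cast
    refine Finset.sum_congr rfl fun i _ => ?_
    by_cases h : Y (T^[i] ω) ≤ y
    · rw [hg, Set.indicator_of_mem (by exact h), if_pos h]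
    · rw [hg, Set.indicator_of_notMem (by exact h), if_neg h]
  have hint : ∫ ω, g ω ∂P = (P s).toReal := by
    rw [hg, integral_indicator_const (1:ℝ) hsm]
    simp
    rfl
  have hmain := birkhoff_bounded hT hgm zero_le_one hb
  rw [hint] at hmain
  filter_upwards [hmain] with ω hω
  have : (fun n : ℕ => bS T g n ω / n)
      = fun n : ℕ => (((Finset.range n).filter (fun i => Y (T^[i] ω) ≤ y)).card : ℝ) / n := by
    funext n; rw [hbS]
  rwa [this] at hω

/-- Deterministic bounds on the sample-quantile `sInf` in terms of counts. -/
lemma sInf_count_bounds (Z : ℕ → ℝ) (n : ℕ) (hn : 1 ≤ n) (q : ℝ) (hq0 : 0 < q) (hq1 : q < 1)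
    (y1 y2 : ℝ)
    (h2 : (n:ℝ) * q + 1 ≤ (((Finset.range n).filter (fun i => Z i ≤ y2)).card : ℝ))
    (h1 : (((Finset.range n).filter (fun i => Z i ≤ y1)).card : ℝ) < (n:ℝ) * q) :
    y1 ≤ sInf {y : ℝ | ⌈(n:ℝ)*q⌉₊ ≤ ((Finset.range n).filter (fun i => Z i ≤ y)).card} ∧
    sInf {y : ℝ | ⌈(n:ℝ)*q⌉₊ ≤ ((Finset.range n).filter (fun i => Z i ≤ y)).card} ≤ y2 := by
  have hne : (Finset.range n).Nonempty := ⟨0, Finset.mem_range.mpr hn⟩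
  have hnpos : (0:ℝ) < n := by exact_mod_cast hn
  set S := {y : ℝ | ⌈(n:ℝ)*q⌉₊ ≤ ((Finset.range n).filter (fun i => Z i ≤ y)).card} with hS
  have hcmono : ∀ {a b : ℝ}, a ≤ b →
      ((Finset.range n).filter (fun i => Z i ≤ a)).card
        ≤ ((Finset.range n).filter (fun i => Z i ≤ b)).card := by
    intro a b hab
    apply Finset.card_le_card
    apply Finset.monotone_filter_right
    intro i _ hi
    exact le_trans hi hab
  have hSne : S.Nonempty := by
    refine ⟨(Finset.range n).sup' hne Z, ?_⟩
    rw [hS, Set.mem_setOf_eq]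
    have hfil : (Finset.range n).filter (fun i => Z i ≤ (Finset.range n).sup' hne Z)
        = Finset.range n :=
      Finset.filter_true_of_mem fun i hi => Finset.le_sup' Z hi
    rw [hfil, Finset.card_range]
    exact Nat.ceil_le.mpr (by nlinarith)
  have hjpos : 1 ≤ ⌈(n:ℝ)*q⌉₊ := Nat.one_le_ceil_iff.mpr (by positivity)
  have hSbdd : BddBelow S := by
    refine ⟨(Finset.range n).inf' hne Z, fun y hy => ?_⟩
    rw [hS, Set.mem_setOf_eq] at hy
    have hcard : 0 < ((Finset.range n).filter (fun i => Z i ≤ y)).card :=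
      lt_of_lt_of_le hjpos hy
    obtain ⟨i, hi⟩ := Finset.card_pos.mp hcard
    rw [Finset.mem_filter] at hi
    exact le_trans (Finset.inf'_le Z hi.1) hi.2
  constructor
  · refine le_csInf hSne fun y hy => ?_
    by_contra hc
    push_neg at hc
    rw [hS, Set.mem_setOf_eq] at hy
    have hle := hcmono hc.le
    have hlt : (((Finset.range n).filter (fun i => Z i ≤ y)).card : ℝ) < (n:ℝ)*q :=
      lt_of_le_of_lt (Nat.cast_le.mpr hle) h1
    have hj : ((⌈(n:ℝ)*q⌉₊ : ℝ)) ≤ (((Finset.range n).filter (fun i => Z i ≤ y)).card : ℝ) :=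
      Nat.cast_le.mpr hy
    linarith [Nat.le_ceil ((n:ℝ)*q)]
  · refine csInf_le hSbdd ?_
    rw [hS, Set.mem_setOf_eq]
    have hceil : ((⌈(n:ℝ)*q⌉₊:ℝ)) < (n:ℝ)*q + 1 := Nat.ceil_lt_add_one (by positivity)
    have hfin : ((⌈(n:ℝ)*q⌉₊:ℝ)) ≤ (((Finset.range n).filter (fun i => Z i ≤ y2)).card : ℝ) := by
      linarith
    exact_mod_cast hfin

/-- The sample quantile `ξ̂_{n,q}` of `Y 0, ..., Y (n-1)`: the `j`-th order
statistic where `j - 1 < n q ≤ j`, i.e. `j = ⌈n q⌉`. -/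
noncomputable def sampleQuantile {Ω : Type*} (Y : ℕ → Ω → ℝ) (n : ℕ) (q : ℝ) (ω : Ω) : ℝ :=
  sInf {y : ℝ | ⌈(n : ℝ) * q⌉₊ ≤ ((Finset.range n).filter (fun i => Y i ω ≤ y)).card}

/-- The `q`-quantile of a distribution function `F`: `inf {y | F y ≥ q}`. -/
noncomputable def quantileOf (F : ℝ → ℝ) (q : ℝ) : ℝ :=
  sInf {y : ℝ | q ≤ F y}

/-- For a strictly stationary process `Yₙ = Y₀ ∘ Tⁿ` with `T` ergodic, whose common
marginal distribution function `F_V` is absolutely continuous with continuous density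
`f_V` satisfying `0 < f_V(ξ_q)`, the sample quantile converges almost surely to `ξ_q`. -/
theorem sampleQuantile_tendsto_quantile
    {Ω : Type*} [MeasurableSpace Ω] (P : Measure Ω) [IsProbabilityMeasure P]
    (T : Ω → Ω) (hT : Ergodic T P)
    (Y : Ω → ℝ) (hY : Measurable Y)
    (q : ℝ) (hq0 : 0 < q) (hq1 : q < 1)
    (FV : ℝ → ℝ) (hFV : ∀ y, FV y = (P {ω | Y ω ≤ y}).toReal)
    (fV : ℝ → ℝ) (hfc : Continuous fV) (hfnn : ∀ t, 0 ≤ fV t)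
    (hcdf : ∀ y, FV y = ∫ t in Set.Iic y, fV t)
    (ξ : ℝ) (hξ : ξ = quantileOf FV q)
    (hfpos : 0 < fV ξ) :
    ∀ᵐ ω ∂P,
      Tendsto (fun n : ℕ => sampleQuantile (fun i ω' => Y (T^[i] ω')) n q ω) atTop (𝓝 ξ) := by
  have hξ' : ξ = sInf {y : ℝ | q ≤ FV y} := hξ
  have hmono : Monotone FV := by
    intro a b hab
    rw [hFV a, hFV b]
    exact ENNReal.toReal_mono (measure_ne_top _ _)
      (measure_mono fun ω h => le_trans h hab)
  -- some b with q < FV b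
  have htop : ∃ b : ℝ, q < FV b := by
    have hmonos : Monotone (fun n : ℕ => {ω | Y ω ≤ (n:ℝ)}) := by
      intro a b hab ω
      simp only [Set.mem_setOf_eq]
      intro h
      exact le_trans h (Nat.cast_le.mpr hab)
    have hU : ⋃ n : ℕ, {ω | Y ω ≤ (n:ℝ)} = Set.univ := by
      ext ω
      simp only [Set.mem_iUnion, Set.mem_setOf_eq, Set.mem_univ, iff_true]
      exact exists_nat_ge (Y ω)
    have h := tendsto_measure_iUnion_atTop (μ := P) hmonos
    rw [hU, measure_univ] at h
    have h2 := (ENNReal.tendsto_toReal ENNReal.one_ne_top).comp h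
    have h3 : Tendsto (fun n : ℕ => FV n) atTop (𝓝 1) := by
      have h4 : (fun n : ℕ => FV (n:ℝ))
          = ENNReal.toReal ∘ (P ∘ fun n : ℕ => {ω | Y ω ≤ (n:ℝ)}) :=
        funext fun n => hFV _
      rw [h4]
      simpa using h2
    obtain ⟨n, hn⟩ := (h3.eventually (eventually_gt_nhds hq1)).exists
    exact ⟨n, hn⟩
  obtain ⟨b, hbq⟩ := htop
  -- some y₀ with FV y₀ < q
  have hbot : ∃ y₀ : ℝ, FV y₀ < q := by
    have hanti : Antitone (fun n : ℕ => {ω | Y ω ≤ -(n:ℝ)}) := by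
      intro a b hab ω
      simp only [Set.mem_setOf_eq]
      intro h
      have : -(b:ℝ) ≤ -(a:ℝ) := neg_le_neg (Nat.cast_le.mpr hab)
      linarith
    have hI : ⋂ n : ℕ, {ω | Y ω ≤ -(n:ℝ)} = ∅ := by
      ext ω
      simp only [Set.mem_iInter, Set.mem_setOf_eq, Set.mem_empty_iff_false, iff_false, not_forall]
      obtain ⟨n, hn⟩ := exists_nat_gt (-(Y ω))
      exact ⟨n, by push_neg; linarith⟩
    have h := tendsto_measure_iInter_atTop (μ := P) (s := fun n : ℕ => {ω | Y ω ≤ -(n:ℝ)})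
      (fun n => (hY measurableSet_Iic : MeasurableSet {ω | Y ω ≤ -(n:ℝ)}).nullMeasurableSet)
      hanti ⟨0, measure_ne_top _ _⟩
    rw [hI, measure_empty] at h
    have h2 := (ENNReal.tendsto_toReal ENNReal.zero_ne_top).comp h
    have h3 : Tendsto (fun n : ℕ => FV (-(n:ℝ))) atTop (𝓝 0) := by
      have h4 : (fun n : ℕ => FV (-(n:ℝ)))
          = ENNReal.toReal ∘ (fun n : ℕ => P {ω | Y ω ≤ -(n:ℝ)}) :=
        funext fun n => hFV _
      rw [h4]
      exact h2
    obtain ⟨n, hn⟩ := (h3.eventually (eventually_lt_nhds hq0)).exists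
    exact ⟨-(n:ℝ), hn⟩
  obtain ⟨y₀, hy₀⟩ := hbot
  -- fV is integrable on every Iic
  have hInt : ∀ y : ℝ, IntegrableOn fV (Set.Iic y) := by
    intro y
    by_contra hni
    have h0 : FV (max y b) = 0 := by
      have hni' : ¬ IntegrableOn fV (Set.Iic (max y b)) := fun hcon =>
        hni (hcon.mono_set (Set.Iic_subset_Iic.mpr (le_max_left _ _)))
      rw [hcdf (max y b), integral_undef hni']
    have hmb : FV b ≤ FV (max y b) := hmono (le_max_right _ _)
    have hFV0 : 0 ≤ FV b := by rw [hFV]; exact ENNReal.toReal_nonneg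
    linarith
  -- difference formula
  have hdiff : ∀ a c : ℝ, a ≤ c → FV c = FV a + ∫ t in Set.Ioc a c, fV t := by
    intro a c hac
    rw [hcdf a, hcdf c, ← Set.Iic_union_Ioc_eq_Iic hac,
      setIntegral_union (Set.Iic_disjoint_Ioc le_rfl) measurableSet_Ioc
        (hInt a) ((hInt c).mono_set Set.Ioc_subset_Iic_self)]
  -- the quantile set
  have hSne : Set.Nonempty {y : ℝ | q ≤ FV y} := ⟨b, hbq.le⟩
  have hSbdd : BddBelow {y : ℝ | q ≤ FV y} := by
    refine ⟨y₀, fun y hy => ?_⟩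
    by_contra hc
    push_neg at hc
    exact absurd (le_trans hy (hmono hc.le)) (not_le.mpr hy₀)
  have hlow : ∀ y : ℝ, y < ξ → FV y < q := by
    intro y hyξ
    by_contra hc
    push_neg at hc
    have : ξ ≤ y := hξ' ▸ csInf_le hSbdd hc
    linarith
  -- q ≤ FV ξ
  obtain ⟨xM, hxMmem, hM⟩ := isCompact_Icc.exists_isMaxOn
    (⟨ξ, by constructor <;> linarith⟩ : (Set.Icc ξ (ξ+1)).Nonempty) hfc.continuousOn
  rw [isMaxOn_iff] at hM
  have hM0 : 0 ≤ fV xM := hfnn xM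
  have hqξ : q ≤ FV ξ := by
    refine real_le_of_forall_pos_le_add fun ε hε => ?_
    set M := fV xM with hMdef
    set δ := min (ε/(M+1)) 1 with hδdef
    have hδpos : 0 < δ := lt_min (by positivity) one_pos
    have hδ1 : δ ≤ 1 := min_le_right _ _
    have hδε : M * δ ≤ ε := by
      have hδle : δ ≤ ε/(M+1) := min_le_left _ _
      have h8 : M * (ε/(M+1)) = (M*ε)/(M+1) := by ring
      have h9 : (M*ε)/(M+1) ≤ ε := by
        rw [div_le_iff₀ (by positivity)]
        nlinarith
      nlinarith
    obtain ⟨y, hyS, hyδ⟩ := exists_lt_of_csInf_lt hSne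
      (show sInf {y : ℝ | q ≤ FV y} < ξ + δ by rw [← hξ']; linarith)
    rcases le_or_gt y ξ with hcase | hcase
    · exact le_add_of_le_of_nonneg (le_trans hyS (hmono hcase)) hε.le
    · have hdiffy := hdiff ξ y hcase.le
      have hib : ∫ t in Set.Ioc ξ y, fV t ≤ M * (y - ξ) := by
        have h7 : ∫ t in Set.Ioc ξ y, fV t ≤ ∫ _t in Set.Ioc ξ y, M :=
          setIntegral_mono_on ((hInt y).mono_set Set.Ioc_subset_Iic_self)
            (integrableOn_const measure_Ioc_lt_top.ne) measurableSet_Ioc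
            (fun t ht => hM t ⟨le_of_lt ht.1, le_trans ht.2 (by linarith)⟩)
        rwa [setIntegral_const, Real.volume_real_Ioc_of_le (by linarith),
          smul_eq_mul, mul_comm] at h7
      have hyS' : q ≤ FV y := hyS
      have hq1' : q ≤ FV ξ + M * (y - ξ) := by rw [hdiffy] at hyS'; linarith
      have hMy : M * (y - ξ) ≤ M * δ := by nlinarith
      linarith
  -- strict increase on the right of ξ
  have hupper : ∀ ε : ℝ, 0 < ε → q < FV (ξ + ε) := by
    intro ε hε
    obtain ⟨δ0, hδ0, hc⟩ : ∃ δ0 > 0, ∀ t ∈ Set.Icc ξ (ξ+δ0), fV ξ/2 ≤ fV t := by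
      have hcont : ContinuousAt fV ξ := hfc.continuousAt
      rw [Metric.continuousAt_iff] at hcont
      obtain ⟨δ, hδ, hδ'⟩ := hcont (fV ξ/2) (by linarith)
      refine ⟨δ/2, by linarith, fun t ht => ?_⟩
      rw [Set.mem_Icc] at ht
      have hd : dist t ξ < δ := by
        rw [Real.dist_eq, abs_lt]
        constructor <;> linarith
      have := hδ' hd
      rw [Real.dist_eq, abs_lt] at this
      linarith
    set δ := min ε δ0 with hδdef
    have hδpos : 0 < δ := lt_min hε hδ0
    have hδε : δ ≤ ε := min_le_left _ _
    have hδδ0 : δ ≤ δ0 := min_le_right _ _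
    have hib : fV ξ/2 * δ ≤ ∫ t in Set.Ioc ξ (ξ+δ), fV t := by
      have h7 : ∫ _t in Set.Ioc ξ (ξ+δ), (fV ξ/2) ≤ ∫ t in Set.Ioc ξ (ξ+δ), fV t :=
        setIntegral_mono_on (integrableOn_const measure_Ioc_lt_top.ne)
          ((hInt (ξ+δ)).mono_set Set.Ioc_subset_Iic_self) measurableSet_Ioc
          (fun t ht => hc t ⟨le_of_lt ht.1, le_trans ht.2 (by linarith)⟩)
      rwa [setIntegral_const, Real.volume_real_Ioc_of_le (by linarith),
        smul_eq_mul, mul_comm,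
        show ξ + δ - ξ = δ by ring] at h7
    have hstep : q < FV (ξ + δ) := by
      rw [hdiff ξ (ξ+δ) (by linarith)]
      nlinarith
    exact lt_of_lt_of_le hstep (hmono (by linarith))
  -- the a.e. event
  have haek : ∀ k : ℕ, ∀ᵐ ω ∂P,
      (Tendsto (fun n : ℕ =>
          (((Finset.range n).filter (fun i => Y (T^[i] ω) ≤ ξ - 1/((k:ℝ)+1))).card : ℝ)/n)
        atTop (𝓝 (FV (ξ - 1/((k:ℝ)+1)))) ∧
       Tendsto (fun n : ℕ =>
          (((Finset.range n).filter (fun i => Y (T^[i] ω) ≤ ξ + 1/((k:ℝ)+1))).card : ℝ)/n)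
        atTop (𝓝 (FV (ξ + 1/((k:ℝ)+1))))) := by
    intro k
    have ha := birkhoff_count hT hY (ξ - 1/((k:ℝ)+1))
    have hb := birkhoff_count hT hY (ξ + 1/((k:ℝ)+1))
    rw [← hFV] at ha hb
    exact ha.and hb
  filter_upwards [ae_all_iff.mpr haek] with ω hω
  rw [Metric.tendsto_atTop]
  intro ε hε
  obtain ⟨k, hk⟩ := exists_nat_one_div_lt hε
  have hk0 : (0:ℝ) < 1/((k:ℝ)+1) := by positivity
  obtain ⟨h1, h2⟩ := hω k
  have hF1 : FV (ξ - 1/((k:ℝ)+1)) < q := hlow _ (by linarith)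
  have hF2 : q < FV (ξ + 1/((k:ℝ)+1)) := hupper _ hk0
  set c2 := (q + FV (ξ + 1/((k:ℝ)+1)))/2 with hc2
  have hc2q : q < c2 := by rw [hc2]; linarith
  have hev2 : ∀ᶠ n : ℕ in atTop,
      c2 < (((Finset.range n).filter (fun i => Y (T^[i] ω) ≤ ξ + 1/((k:ℝ)+1))).card : ℝ)/n :=
    h2.eventually (eventually_gt_nhds (by rw [hc2]; linarith))
  have hev1 : ∀ᶠ n : ℕ in atTop,
      (((Finset.range n).filter (fun i => Y (T^[i] ω) ≤ ξ - 1/((k:ℝ)+1))).card : ℝ)/n < q :=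
    h1.eventually (eventually_lt_nhds hF1)
  have hev3 : ∀ᶠ n : ℕ in atTop, (1:ℝ)/(c2 - q) ≤ (n:ℝ) := by
    obtain ⟨N, hN⟩ := exists_nat_ge ((1:ℝ)/(c2-q))
    filter_upwards [eventually_ge_atTop N] with n hn
    exact le_trans hN (Nat.cast_le.mpr hn)
  have hev4 : ∀ᶠ n : ℕ in atTop, 1 ≤ n := eventually_ge_atTop 1
  obtain ⟨N, hN⟩ := ((hev1.and hev2).and (hev3.and hev4)).exists_forall_of_atTop
  refine ⟨N, fun n hn => ?_⟩
  obtain ⟨⟨ha1, ha2⟩, ha3, ha4⟩ := hN n hn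
  have hnpos : (0:ℝ) < n := by exact_mod_cast ha4
  have hb2 : (n:ℝ)*q + 1 ≤
      (((Finset.range n).filter (fun i => Y (T^[i] ω) ≤ ξ + 1/((k:ℝ)+1))).card : ℝ) := by
    have h5 : c2 * n <
        (((Finset.range n).filter (fun i => Y (T^[i] ω) ≤ ξ + 1/((k:ℝ)+1))).card : ℝ) :=
      (lt_div_iff₀ hnpos).mp ha2
    have h6 : 1 ≤ (n:ℝ) * (c2 - q) := (div_le_iff₀ (by linarith)).mp ha3
    nlinarith
  have hb1 : (((Finset.range n).filter (fun i => Y (T^[i] ω) ≤ ξ - 1/((k:ℝ)+1))).card : ℝ)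
      < (n:ℝ)*q := by
    rw [div_lt_iff₀ hnpos] at ha1
    linarith [ha1]
  obtain ⟨hlow', hhigh'⟩ := sInf_count_bounds (fun i => Y (T^[i] ω)) n ha4 q hq0 hq1
    (ξ - 1/((k:ℝ)+1)) (ξ + 1/((k:ℝ)+1)) hb2 hb1
  have e1 : ξ - 1/((k:ℝ)+1) ≤ sampleQuantile (fun i ω' => Y (T^[i] ω')) n q ω := hlow'
  have e2 : sampleQuantile (fun i ω' => Y (T^[i] ω')) n q ω ≤ ξ + 1/((k:ℝ)+1) := hhigh'
  rw [Real.dist_eq, abs_sub_lt_iff]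
  constructor <;> linarith
end

section
/- Suppose the Markov chain X is polynomially ergodic of order m > 1 and satisfies the minorization P(x,A) ≥ s(x)Q(A) with E_π s > 0. Then the function y ↦ σ²(y) = Var_π I(Y_0 ≤ y) + 2 Σ_{k=1}^∞ Cov_π[I(Y_0 ≤ y), I(Y_k ≤ y)] is continuous at ξ_q. -/
/- STATEMENT 13: for a polynomially ergodic (order m > 1) Markov chain satisfying a
one-step minorization P(x,A) ≥ s(x)Q(A) with E_π s > 0, the asymptotic variance
function σ²(y) of the indicators I(Y ≤ y) is continuous at the quantile ξ_q. -/

open MeasureTheory ProbabilityTheory Filter Topology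

/-- Total variation norm `‖μ - ν‖ = sup_A |μ(A) - ν(A)|` (sup over measurable sets). -/
noncomputable def tvDist {𝒳 : Type*} [MeasurableSpace 𝒳] (μ ν : Measure 𝒳) : ℝ :=
  ⨆ A : {s : Set 𝒳 // MeasurableSet s}, |(μ A.1).toReal - (ν A.1).toReal|

/-- The `n`-step kernel `P^n` of a Markov kernel. -/
noncomputable def kpow {𝒳 : Type*} [MeasurableSpace 𝒳] (κ : Kernel 𝒳 𝒳) : ℕ → Kernel 𝒳 𝒳
  | 0 => Kernel.id
  | n + 1 => κ.comp (kpow κ n)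

/-- `X` is a Markov chain on `Ω` with transition kernel `κ`: for each `n`, the joint
law of `(X 0, ..., X n, X (n+1))` is the law of `(X 0, ..., X n)` composed with
`κ` applied to the last coordinate. -/
def IsMarkovChain {𝒳 Ω : Type*} [MeasurableSpace 𝒳] [MeasurableSpace Ω]
    (P : Measure Ω) (κ : Kernel 𝒳 𝒳) (X : ℕ → Ω → 𝒳) : Prop :=
  ∀ n : ℕ, P.map (fun ω => ((fun i : Fin (n + 1) => X i ω), X (n + 1) ω)) =
    (P.map (fun ω (i : Fin (n + 1)) => X i ω)).bind
      (fun v => (κ (v (Fin.last n))).map (fun x => (v, x)))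

/-- Polynomial ergodicity of order `m`: `‖P^n(x,·) - π‖ ≤ M(x) n^{-m}` for a
`π`-integrable nonnegative `M`. -/
def PolyErgodic {𝒳 : Type*} [MeasurableSpace 𝒳] (κ : Kernel 𝒳 𝒳) (π : Measure 𝒳)
    (m : ℝ) : Prop :=
  ∃ M : 𝒳 → ℝ, Measurable M ∧ (∀ x, 0 ≤ M x) ∧ Integrable M π ∧
    ∀ x : 𝒳, ∀ n : ℕ, 1 ≤ n → tvDist ((kpow κ n) x) π ≤ M x * (n : ℝ) ^ (-m)

/-- The asymptotic variance
`σ²(y) = Var_π I(Y₀ ≤ y) + 2 ∑_{k≥1} Cov_π[I(Y₀ ≤ y), I(Y_k ≤ y)]`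
of a stationary process `Y`. -/
noncomputable def sigmaSqFn {Ω : Type*} [MeasurableSpace Ω] (P : Measure Ω)
    (Y : ℕ → Ω → ℝ) (y : ℝ) : ℝ :=
  ((P {ω | Y 0 ω ≤ y}).toReal - ((P {ω | Y 0 ω ≤ y}).toReal) ^ 2) +
    2 * ∑' k : ℕ, ((P {ω | Y 0 ω ≤ y ∧ Y (k + 1) ω ≤ y}).toReal -
      (P {ω | Y 0 ω ≤ y}).toReal * (P {ω | Y (k + 1) ω ≤ y}).toReal)


theorem Measure.map_bind' {α β γ : Type*} [MeasurableSpace α] [MeasurableSpace β] [MeasurableSpace γ]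
    (μ : Measure α) (f : α → Measure β) (g : β → γ)
    (hf : Measurable f) (hg : Measurable g) :
    (μ.bind f).map g = μ.bind (fun a => (f a).map g) := by
  have hm : Measurable fun a => (f a).map g := (Measure.measurable_map g hg).comp hf
  ext s hs
  rw [Measure.map_apply hg hs, Measure.bind_apply (hg hs) hf.aemeasurable, Measure.bind_apply hs hm.aemeasurable]
  exact lintegral_congr fun a => (Measure.map_apply hg hs).symm

theorem Measure.bind_map' {α β γ : Type*} [MeasurableSpace α] [MeasurableSpace β] [MeasurableSpace γ]
    (μ : Measure α) (g : α → β) (f : β → Measure γ)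
    (hg : Measurable g) (hf : Measurable f) :
    (μ.map g).bind f = μ.bind (fun a => f (g a)) := by
  have hm : Measurable fun a => f (g a) := hf.comp hg
  ext s hs
  have hc : Measurable fun ν : Measure γ => ν s := Measure.measurable_coe hs
  rw [Measure.bind_apply hs hf.aemeasurable, Measure.bind_apply hs hm.aemeasurable]
  exact lintegral_map (hc.comp hf) hg


instance kpow_isMarkovKernel {α : Type*} [MeasurableSpace α] (κ : Kernel α α) [IsMarkovKernel κ]
    (n : ℕ) : IsMarkovKernel (kpow κ n) := by
  induction n with
  | zero => rw [kpow]; infer_instance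
  | succ n ih => rw [kpow]; infer_instance

instance comap_isMarkovKernel {α γ : Type*} [MeasurableSpace α] [MeasurableSpace γ]
    (κ : Kernel α α) [IsMarkovKernel κ] (g : γ → α) (hg : Measurable g) :
    IsMarkovKernel (κ.comap g hg) :=
  ⟨fun c => by rw [Kernel.comap_apply]; infer_instance⟩

theorem measurable_mapPair {α β γ : Type*} [MeasurableSpace α] [MeasurableSpace β] [MeasurableSpace γ]
    (η : Kernel α β) [IsMarkovKernel η] (g : γ → α) (hg : Measurable g) :
    Measurable (fun c : γ => ((η (g c)).map (fun x => (c, x)) : Measure (γ × β))) := by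
  have h : (fun c : γ => ((η (g c)).map (fun x => (c, x)) : Measure (γ × β))) =
      fun c => ((Kernel.id : Kernel γ γ) ×ₖ (η.comap g hg)) c := by
    funext c
    rw [Kernel.prod_apply, Kernel.id_apply, Kernel.comap_apply, Measure.dirac_prod]
  rw [h]
  exact Kernel.measurable _

theorem measurable_T {α : Type*} [MeasurableSpace α] (κ : Kernel α α) [IsMarkovKernel κ] :
    Measurable (fun p : α × α => ((κ p.2).map (fun x => (p.1, x)) : Measure (α × α))) := by
  have h : (fun p : α × α => ((κ p.2).map (fun x => (p.1, x)) : Measure (α × α))) =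
      fun p => ((Kernel.deterministic (Prod.fst : α × α → α) measurable_fst) ×ₖ
        (κ.comap Prod.snd measurable_snd)) p := by
    funext p
    rw [Kernel.prod_apply, Kernel.deterministic_apply, Kernel.comap_apply, Measure.dirac_prod]
  rw [h]
  exact Kernel.measurable _


theorem chain_marginal {𝒳 Ω : Type*} [MeasurableSpace 𝒳] [MeasurableSpace Ω]
    (κ : Kernel 𝒳 𝒳) [IsMarkovKernel κ] (π : Measure 𝒳)
    (hinv : π.bind (fun x => κ x) = π)
    (P : Measure Ω)
    (X : ℕ → Ω → 𝒳) (hXm : ∀ n, Measurable (X n))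
    (hX0 : P.map (X 0) = π) (hchain : IsMarkovChain P κ X) :
    ∀ n, P.map (X n) = π := by
  intro n
  induction n with
  | zero => exact hX0
  | succ n ih =>
    have hFv : Measurable (fun ω (i : Fin (n+1)) => X i ω) :=
      measurable_pi_lambda _ fun i => hXm i
    have hpair : Measurable (fun ω => ((fun i : Fin (n+1) => X i ω), X (n+1) ω)) :=
      hFv.prodMk (hXm (n+1))
    have hint : Measurable (fun v : Fin (n+1) → 𝒳 =>
        ((κ (v (Fin.last n))).map (fun x => (v, x)) : Measure ((Fin (n+1) → 𝒳) × 𝒳))) :=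
      measurable_mapPair κ _ (measurable_pi_apply (Fin.last n))
    have step1 : P.map (X (n+1)) =
        (P.map (fun ω (i : Fin (n+1)) => X i ω)).bind (fun v => κ (v (Fin.last n))) := by
      calc P.map (X (n+1))
          = (P.map (fun ω => ((fun i : Fin (n+1) => X i ω), X (n+1) ω))).map Prod.snd := by
            rw [Measure.map_map measurable_snd hpair]; rfl
        _ = ((P.map (fun ω (i : Fin (n+1)) => X i ω)).bind
              (fun v => (κ (v (Fin.last n))).map (fun x => (v, x)))).map Prod.snd := by
            rw [hchain n]
        _ = (P.map (fun ω (i : Fin (n+1)) => X i ω)).bind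
              (fun v => ((κ (v (Fin.last n))).map (fun x => (v, x))).map Prod.snd) := by
            rw [Measure.map_bind' _ _ _ hint measurable_snd]
        _ = (P.map (fun ω (i : Fin (n+1)) => X i ω)).bind (fun v => κ (v (Fin.last n))) := by
            congr 1
            funext v
            rw [Measure.map_map measurable_snd measurable_prodMk_left]
            exact Measure.map_id
    have step2 : (P.map (fun ω (i : Fin (n+1)) => X i ω)).bind (fun v => κ (v (Fin.last n)))
        = (P.map (X n)).bind (fun x => κ x) := by
      have he : Measurable (fun v : Fin (n+1) → 𝒳 => v (Fin.last n)) :=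
        measurable_pi_apply _
      rw [← Measure.bind_map' _ _ _ he (Kernel.measurable κ),
        Measure.map_map he hFv]
      rfl
    rw [step1, step2, ih, hinv]

theorem chain_pair {𝒳 Ω : Type*} [MeasurableSpace 𝒳] [MeasurableSpace Ω]
    (κ : Kernel 𝒳 𝒳) [IsMarkovKernel κ] (π : Measure 𝒳)
    (P : Measure Ω)
    (X : ℕ → Ω → 𝒳) (hXm : ∀ n, Measurable (X n))
    (hX0 : P.map (X 0) = π) (hchain : IsMarkovChain P κ X) :
    ∀ n, P.map (fun ω => (X 0 ω, X n ω)) =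
      π.bind (fun x => ((kpow κ n) x).map (fun z => (x, z))) := by
  intro n
  induction n with
  | zero =>
    have hdup : Measurable (fun x : 𝒳 => (x, x)) := measurable_id.prodMk measurable_id
    have : π.bind (fun x => ((kpow κ 0) x).map (fun z => (x, z))) = π.map (fun x => (x, x)) := by
      have h1 : (fun x => ((kpow κ 0) x).map (fun z : 𝒳 => (x, z))) =
          fun x : 𝒳 => Measure.dirac (x, x) := by
        funext x
        rw [kpow, Kernel.id_apply, Measure.map_dirac' measurable_prodMk_left]
      rw [h1, Measure.bind_dirac_eq_map π hdup]
    rw [this, ← hX0, Measure.map_map hdup (hXm 0)]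
    rfl
  | succ n ih =>
    have hFv : Measurable (fun ω (i : Fin (n+1)) => X i ω) :=
      measurable_pi_lambda _ fun i => hXm i
    have hpair : Measurable (fun ω => ((fun i : Fin (n+1) => X i ω), X (n+1) ω)) :=
      hFv.prodMk (hXm (n+1))
    have hint : Measurable (fun v : Fin (n+1) → 𝒳 =>
        ((κ (v (Fin.last n))).map (fun x => (v, x)) : Measure ((Fin (n+1) → 𝒳) × 𝒳))) :=
      measurable_mapPair κ _ (measurable_pi_apply (Fin.last n))
    have hG : Measurable (fun p : (Fin (n+1) → 𝒳) × 𝒳 => (p.1 0, p.2)) :=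
      ((measurable_pi_apply 0).comp measurable_fst).prodMk measurable_snd
    have hT : Measurable (fun p : 𝒳 × 𝒳 => ((κ p.2).map (fun x => (p.1, x)) : Measure (𝒳 × 𝒳))) :=
      measurable_T κ
    have hH : Measurable (fun v : Fin (n+1) → 𝒳 => (v 0, v (Fin.last n))) :=
      (measurable_pi_apply 0).prodMk (measurable_pi_apply (Fin.last n))
    -- μ_{n+1} = μ_n.bind T
    have step1 : P.map (fun ω => (X 0 ω, X (n+1) ω)) =
        (P.map (fun ω => (X 0 ω, X n ω))).bind
          (fun p => (κ p.2).map (fun x => (p.1, x))) := by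
      calc P.map (fun ω => (X 0 ω, X (n+1) ω))
          = (P.map (fun ω => ((fun i : Fin (n+1) => X i ω), X (n+1) ω))).map
              (fun p => (p.1 0, p.2)) := by
            rw [Measure.map_map hG hpair]; rfl
        _ = ((P.map (fun ω (i : Fin (n+1)) => X i ω)).bind
              (fun v => (κ (v (Fin.last n))).map (fun x => (v, x)))).map
              (fun p => (p.1 0, p.2)) := by rw [hchain n]
        _ = (P.map (fun ω (i : Fin (n+1)) => X i ω)).bind
              (fun v => ((κ (v (Fin.last n))).map (fun x => (v, x))).map
                (fun p : (Fin (n+1) → 𝒳) × 𝒳 => (p.1 0, p.2))) := by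
            rw [Measure.map_bind' _ _ _ hint hG]
        _ = (P.map (fun ω (i : Fin (n+1)) => X i ω)).bind
              (fun v => (κ ((fun w : Fin (n+1) → 𝒳 => (w 0, w (Fin.last n))) v).2).map
                (fun x => (((fun w : Fin (n+1) → 𝒳 => (w 0, w (Fin.last n))) v).1, x))) := by
            congr 1
            funext v
            rw [Measure.map_map hG measurable_prodMk_left]
            rfl
        _ = ((P.map (fun ω (i : Fin (n+1)) => X i ω)).map
              (fun v => (v 0, v (Fin.last n)))).bind
              (fun p => (κ p.2).map (fun x => (p.1, x))) := by
            rw [Measure.bind_map' _ _ _ hH hT]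
        _ = (P.map (fun ω => (X 0 ω, X n ω))).bind
              (fun p => (κ p.2).map (fun x => (p.1, x))) := by
            rw [Measure.map_map hH hFv]
            rfl
    -- substitute ih and push bind through
    rw [step1, ih]
    have hS : Measurable (fun x : 𝒳 => ((kpow κ n x).map (fun z => (x, z)) : Measure (𝒳 × 𝒳))) :=
      measurable_mapPair (kpow κ n) id measurable_id
    rw [Measure.bind_bind hS.aemeasurable hT.aemeasurable]
    congr 1
    funext x
    have hmk : Measurable (Prod.mk x : 𝒳 → 𝒳 × 𝒳) := measurable_prodMk_left
    calc ((kpow κ n x).map (fun z => (x, z))).bind (fun p => (κ p.2).map (fun w => (p.1, w)))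
        = (kpow κ n x).bind (fun z => (κ z).map (fun w => (x, w))) := by
          rw [Measure.bind_map' _ _ _ hmk hT]
      _ = ((kpow κ n x).bind (fun z => κ z)).map (fun w => (x, w)) := by
          rw [Measure.map_bind' _ _ _ (Kernel.measurable κ) hmk]
      _ = ((kpow κ (n+1)) x).map (fun w => (x, w)) := by
          rw [kpow, Kernel.comp_apply]


theorem abs_toReal_sub_le_tvDist {𝒳 : Type*} [MeasurableSpace 𝒳] (μ ν : Measure 𝒳)
    [IsProbabilityMeasure μ] [IsProbabilityMeasure ν] {A : Set 𝒳} (hA : MeasurableSet A) :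
    |(μ A).toReal - (ν A).toReal| ≤ tvDist μ ν := by
  have hb : BddAbove (Set.range fun B : {s : Set 𝒳 // MeasurableSet s} =>
      |(μ B.1).toReal - (ν B.1).toReal|) := by
    refine ⟨1, ?_⟩
    rintro r ⟨B, rfl⟩
    have h1 : (μ B.1).toReal ≤ 1 := by
      have := prob_le_one (μ := μ) (s := B.1)
      simpa using ENNReal.toReal_le_of_le_ofReal one_pos.le (by simpa using this)
    have h2 : (ν B.1).toReal ≤ 1 := by
      have := prob_le_one (μ := ν) (s := B.1)
      simpa using ENNReal.toReal_le_of_le_ofReal one_pos.le (by simpa using this)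
    have h3 : 0 ≤ (μ B.1).toReal := ENNReal.toReal_nonneg
    have h4 : 0 ≤ (ν B.1).toReal := ENNReal.toReal_nonneg
    rw [abs_le]; constructor <;> linarith
  exact le_ciSup hb ⟨A, hA⟩

theorem term_bound {𝒳 Ω : Type*} [MeasurableSpace 𝒳] [MeasurableSpace Ω]
    (κ : Kernel 𝒳 𝒳) [IsMarkovKernel κ] (π : Measure 𝒳) [IsProbabilityMeasure π]
    (hinv : π.bind (fun x => κ x) = π)
    (P : Measure Ω) [IsProbabilityMeasure P]
    (X : ℕ → Ω → 𝒳) (hXm : ∀ n, Measurable (X n))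
    (hX0 : P.map (X 0) = π) (hchain : IsMarkovChain P κ X)
    (m : ℝ) (M : 𝒳 → ℝ) (hMm : Measurable M) (hM0 : ∀ x, 0 ≤ M x) (hMint : Integrable M π)
    (hpoly : ∀ x : 𝒳, ∀ n : ℕ, 1 ≤ n → tvDist ((kpow κ n) x) π ≤ M x * (n : ℝ) ^ (-m))
    (g : 𝒳 → ℝ) (hg : Measurable g) (y : ℝ) (k : ℕ) :
    |(P {ω | g (X 0 ω) ≤ y ∧ g (X (k+1) ω) ≤ y}).toReal -
      (P {ω | g (X 0 ω) ≤ y}).toReal * (P {ω | g (X (k+1) ω) ≤ y}).toReal| ≤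
      (∫ x, M x ∂π) * ((k+1 : ℕ) : ℝ) ^ (-m) := by
  set A : Set 𝒳 := {x | g x ≤ y} with hAdef
  have hA : MeasurableSet A := hg measurableSet_Iic
  set b : ℝ := ((k+1 : ℕ) : ℝ) ^ (-m) with hbdef
  have hb0 : 0 ≤ b := Real.rpow_nonneg (by positivity) _
  have marg : ∀ n, P {ω | g (X n ω) ≤ y} = π A := by
    intro n
    have : {ω | g (X n ω) ≤ y} = X n ⁻¹' A := rfl
    rw [this, ← Measure.map_apply (hXm n) hA,
      chain_marginal κ π hinv P X hXm hX0 hchain n]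
  set c : ℝ := (π A).toReal with hcdef
  set h : 𝒳 → ℝ := fun x => ((kpow κ (k+1)) x A).toReal with hhdef
  have hhm : Measurable h := (Kernel.measurable_coe _ hA).ennreal_toReal
  have hh01 : ∀ x, 0 ≤ h x ∧ h x ≤ 1 := by
    intro x
    refine ⟨ENNReal.toReal_nonneg, ?_⟩
    have := prob_le_one (μ := (kpow κ (k+1)) x) (s := A)
    simpa [hhdef] using ENNReal.toReal_le_of_le_ofReal one_pos.le (by simpa using this)
  -- joint probability as a set lintegral
  have joint : P {ω | g (X 0 ω) ≤ y ∧ g (X (k+1) ω) ≤ y} =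
      ∫⁻ x in A, (kpow κ (k+1)) x A ∂π := by
    have hS : Measurable (fun x : 𝒳 =>
        (((kpow κ (k+1)) x).map (fun z => (x, z)) : Measure (𝒳 × 𝒳))) :=
      measurable_mapPair (kpow κ (k+1)) id measurable_id
    have hset : {ω | g (X 0 ω) ≤ y ∧ g (X (k+1) ω) ≤ y} =
        (fun ω => (X 0 ω, X (k+1) ω)) ⁻¹' (A ×ˢ A) := by
      ext ω; simp [hAdef, Set.mem_prod]
    have hpairm : Measurable (fun ω => (X 0 ω, X (k+1) ω)) := (hXm 0).prodMk (hXm (k+1))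
    rw [hset, ← Measure.map_apply hpairm (hA.prod hA),
      chain_pair κ π P X hXm hX0 hchain (k+1),
      Measure.bind_apply (hA.prod hA) hS.aemeasurable]
    have hpt : ∀ x : 𝒳, (((kpow κ (k+1)) x).map (fun z => (x, z))) (A ×ˢ A) =
        A.indicator (fun x => (kpow κ (k+1)) x A) x := by
      intro x
      rw [Measure.map_apply measurable_prodMk_left (hA.prod hA)]
      by_cases hx : x ∈ A
      · have : (Prod.mk x) ⁻¹' (A ×ˢ A) = A := by
          ext z; simp [Set.mem_prod, hx]
        rw [this, Set.indicator_of_mem hx]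
      · have : (Prod.mk x) ⁻¹' (A ×ˢ A) = ∅ := by
          ext z; simp [Set.mem_prod, hx]
        rw [this, Set.indicator_of_notMem hx]
        simp
    rw [lintegral_congr hpt, lintegral_indicator hA]
  have hJ : (P {ω | g (X 0 ω) ≤ y ∧ g (X (k+1) ω) ≤ y}).toReal = ∫ x in A, h x ∂π := by
    rw [joint,
      ← integral_toReal ((Kernel.measurable_coe _ hA).aemeasurable.restrict)
        (ae_of_all _ fun x => measure_lt_top _ _)]
  have hhint : Integrable h (π.restrict A) := by
    refine Integrable.mono' (integrable_const 1) hhm.aestronglyMeasurable ?_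
    exact ae_of_all _ fun x => by
      rw [Real.norm_eq_abs, abs_of_nonneg (hh01 x).1]; exact (hh01 x).2
  have hprod : (P {ω | g (X 0 ω) ≤ y}).toReal * (P {ω | g (X (k+1) ω) ≤ y}).toReal =
      ∫ _ in A, c ∂π := by
    rw [marg 0, marg (k+1), setIntegral_const, smul_eq_mul]
    rfl
  rw [hJ, hprod, ← integral_sub hhint (integrable_const c)]
  have habs : |∫ x in A, (h x - c) ∂π| ≤ ∫ x in A, |h x - c| ∂π := by
    simpa [Real.norm_eq_abs] using
      norm_integral_le_integral_norm (μ := π.restrict A) (fun x => h x - c)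
  have hMb : Integrable (fun x => M x * b) π := hMint.mul_const b
  have hstep : ∫ x in A, |h x - c| ∂π ≤ ∫ x in A, M x * b ∂π := by
    refine setIntegral_mono_on (hhint.sub (integrable_const c)).abs hMb.restrict hA ?_
    intro x _
    have h1 : |h x - c| ≤ tvDist ((kpow κ (k+1)) x) π :=
      abs_toReal_sub_le_tvDist _ _ hA
    exact h1.trans (hpoly x (k+1) (Nat.succ_le_succ (Nat.zero_le k)))
  have hstep2 : ∫ x in A, M x * b ∂π ≤ ∫ x, M x * b ∂π :=
    setIntegral_le_integral hMb (ae_of_all _ fun x => mul_nonneg (hM0 x) hb0)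
  calc |∫ x in A, (h x - c) ∂π| ≤ ∫ x in A, |h x - c| ∂π := habs
    _ ≤ ∫ x in A, M x * b ∂π := hstep
    _ ≤ ∫ x, M x * b ∂π := hstep2
    _ = (∫ x, M x ∂π) * b := integral_mul_const _ _

theorem FV_continuous {𝒳 : Type*} [MeasurableSpace 𝒳] (π : Measure 𝒳) [IsProbabilityMeasure π]
    (g : 𝒳 → ℝ) (FV fV : ℝ → ℝ)
    (hFV : ∀ y, FV y = (π {x | g x ≤ y}).toReal) (hfc : Continuous fV)
    (hcdf : ∀ y, FV y = ∫ t in Set.Iic y, fV t) : Continuous FV := by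
  by_cases hall : ∀ bnd : ℝ, IntegrableOn fV (Set.Iic bnd) volume
  · have h1 : FV = fun y => (∫ t in Set.Iic (0:ℝ), fV t) + ∫ t in (0:ℝ)..y, fV t := by
      funext y
      rw [hcdf y, ← intervalIntegral.integral_Iic_sub_Iic (hall 0) (hall y)]
      ring
    rw [h1]
    exact continuous_const.add
      (intervalIntegral.continuous_primitive (fun a b => hfc.intervalIntegrable a b) 0)
  · push_neg at hall
    obtain ⟨b0, hb0⟩ := hall
    have hzero : ∀ y, FV y = 0 := by
      intro y
      rcases le_total y b0 with hy | hy
      · have hb0z : FV b0 = 0 := by rw [hcdf b0]; exact integral_undef hb0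
        have mono : FV y ≤ FV b0 := by
          rw [hFV y, hFV b0]
          exact ENNReal.toReal_mono (measure_ne_top _ _)
            (measure_mono (fun x hx => le_trans hx hy))
        have nn : 0 ≤ FV y := by rw [hFV y]; exact ENNReal.toReal_nonneg
        linarith
      · have hni : ¬ IntegrableOn fV (Set.Iic y) volume :=
          fun h => hb0 (h.mono_set (Set.Iic_subset_Iic.2 hy))
        rw [hcdf y]
        exact integral_undef hni
    have h2 : FV = fun _ => 0 := funext hzero
    rw [h2]
    exact continuous_const

theorem continuous_of_modulus {J F : ℝ → ℝ} (hF : Continuous F)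
    (h : ∀ y z, |J y - J z| ≤ 2 * |F y - F z|) : Continuous J := by
  rw [Metric.continuous_iff] at hF ⊢
  intro a ε hε
  obtain ⟨δ, hδ, hd⟩ := hF a (ε/2) (by linarith)
  refine ⟨δ, hδ, fun y hy => ?_⟩
  have h1 := h y a
  have h2 := hd y hy
  rw [Real.dist_eq] at h2 ⊢
  linarith

theorem J_modulus {Ω : Type*} [MeasurableSpace Ω] (P : Measure Ω) [IsProbabilityMeasure P]
    (U V : Ω → ℝ) (hU : Measurable U) (hV : Measurable V) (F : ℝ → ℝ)
    (hUF : ∀ y, (P {ω | U ω ≤ y}).toReal = F y)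
    (hVF : ∀ y, (P {ω | V ω ≤ y}).toReal = F y) :
    ∀ y z, |(P {ω | U ω ≤ y ∧ V ω ≤ y}).toReal - (P {ω | U ω ≤ z ∧ V ω ≤ z}).toReal| ≤
      2 * |F y - F z| := by
  have key : ∀ y z, z ≤ y →
      |(P {ω | U ω ≤ y ∧ V ω ≤ y}).toReal - (P {ω | U ω ≤ z ∧ V ω ≤ z}).toReal| ≤
        2 * |F y - F z| := by
    intro y z hzy
    have hFmono : F z ≤ F y := by
      rw [← hUF z, ← hUF y]
      exact ENNReal.toReal_mono (measure_ne_top _ _)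
        (measure_mono (fun ω hω => le_trans hω hzy))
    have hJmono : (P {ω | U ω ≤ z ∧ V ω ≤ z}).toReal ≤
        (P {ω | U ω ≤ y ∧ V ω ≤ y}).toReal :=
      ENNReal.toReal_mono (measure_ne_top _ _)
        (measure_mono (fun ω hω => ⟨le_trans hω.1 hzy, le_trans hω.2 hzy⟩))
    have hsubU : {ω | U ω ≤ z} ⊆ {ω | U ω ≤ y} := fun ω hω => le_trans hω hzy
    have hsubV : {ω | V ω ≤ z} ⊆ {ω | V ω ≤ y} := fun ω hω => le_trans hω hzy
    have hdiffU : (P ({ω | U ω ≤ y} \ {ω | U ω ≤ z})).toReal = F y - F z := by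
      rw [measure_diff hsubU ((hU measurableSet_Iic).nullMeasurableSet) (measure_ne_top _ _),
        ENNReal.toReal_sub_of_le (measure_mono hsubU) (measure_ne_top _ _), hUF, hUF]
    have hdiffV : (P ({ω | V ω ≤ y} \ {ω | V ω ≤ z})).toReal = F y - F z := by
      rw [measure_diff hsubV ((hV measurableSet_Iic).nullMeasurableSet) (measure_ne_top _ _),
        ENNReal.toReal_sub_of_le (measure_mono hsubV) (measure_ne_top _ _), hVF, hVF]
    have hincl : {ω | U ω ≤ y ∧ V ω ≤ y} ⊆ {ω | U ω ≤ z ∧ V ω ≤ z} ∪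
        (({ω | U ω ≤ y} \ {ω | U ω ≤ z}) ∪ ({ω | V ω ≤ y} \ {ω | V ω ≤ z})) := by
      intro ω hω
      by_cases h1 : U ω ≤ z
      · by_cases h2 : V ω ≤ z
        · exact Or.inl ⟨h1, h2⟩
        · exact Or.inr (Or.inr ⟨hω.2, h2⟩)
      · exact Or.inr (Or.inl ⟨hω.1, h1⟩)
    have hmeas : P {ω | U ω ≤ y ∧ V ω ≤ y} ≤ P {ω | U ω ≤ z ∧ V ω ≤ z} +
        (P ({ω | U ω ≤ y} \ {ω | U ω ≤ z}) + P ({ω | V ω ≤ y} \ {ω | V ω ≤ z})) :=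
      le_trans (measure_mono hincl) (le_trans (measure_union_le _ _)
        (add_le_add le_rfl (measure_union_le _ _)))
    have hreal : (P {ω | U ω ≤ y ∧ V ω ≤ y}).toReal ≤
        (P {ω | U ω ≤ z ∧ V ω ≤ z}).toReal +
          ((P ({ω | U ω ≤ y} \ {ω | U ω ≤ z})).toReal +
            (P ({ω | V ω ≤ y} \ {ω | V ω ≤ z})).toReal) := by
      have h6 := ENNReal.toReal_mono
        (ENNReal.add_ne_top.2 ⟨measure_ne_top _ _,
          ENNReal.add_ne_top.2 ⟨measure_ne_top _ _, measure_ne_top _ _⟩⟩) hmeas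
      rwa [ENNReal.toReal_add (measure_ne_top _ _)
          (ENNReal.add_ne_top.2 ⟨measure_ne_top _ _, measure_ne_top _ _⟩),
        ENNReal.toReal_add (measure_ne_top _ _) (measure_ne_top _ _)] at h6
    rw [abs_of_nonneg (by linarith), abs_of_nonneg (by linarith)]
    linarith
  intro y z
  rcases le_total z y with h | h
  · exact key y z h
  · rw [abs_sub_comm, abs_sub_comm (F y)]
    exact key z y h

theorem sigmaSq_continuousAt_of_polyErgodic
    {𝒳 Ω : Type*} [MeasurableSpace 𝒳] [MeasurableSpace Ω]
    (κ : Kernel 𝒳 𝒳) [IsMarkovKernel κ]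
    (π : Measure 𝒳) [IsProbabilityMeasure π]
    (hinv : π.bind (fun x => κ x) = π)
    (P : Measure Ω) [IsProbabilityMeasure P]
    (X : ℕ → Ω → 𝒳) (hXm : ∀ n, Measurable (X n))
    (hX0 : P.map (X 0) = π) (hchain : IsMarkovChain P κ X)
    (m : ℝ) (hm : 1 < m) (hpoly : PolyErgodic κ π m)
    -- minorization: P(x, A) ≥ s(x) Q(A) with E_π s > 0
    (s : 𝒳 → ℝ) (hsm : Measurable s) (hs0 : ∀ x, 0 ≤ s x) (hs1 : ∀ x, s x ≤ 1)
    (Q : Measure 𝒳) [IsProbabilityMeasure Q]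
    (hspos : 0 < ∫ x, s x ∂π)
    (hminor : ∀ x : 𝒳, ∀ A : Set 𝒳, MeasurableSet A →
      ENNReal.ofReal (s x) * Q A ≤ κ x A)
    (g : 𝒳 → ℝ) (hg : Measurable g)
    (Y : ℕ → Ω → ℝ) (hYdef : ∀ n ω, Y n ω = g (X n ω))
    (q : ℝ) (hq0 : 0 < q) (hq1 : q < 1)
    (FV : ℝ → ℝ) (hFV : ∀ y, FV y = (π {x | g x ≤ y}).toReal)
    (fV : ℝ → ℝ) (hfc : Continuous fV) (hfnn : ∀ t, 0 ≤ fV t)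
    (hcdf : ∀ y, FV y = ∫ t in Set.Iic y, fV t)
    (ξ : ℝ) (hξ : ξ = quantileOf FV q) (hfpos : 0 < fV ξ) :
    ContinuousAt (sigmaSqFn P Y) ξ := by
  obtain ⟨M, hMm, hM0, hMint, hMb⟩ := hpoly
  set C : ℝ := ∫ x, M x ∂π with hCdef
  have hYm : ∀ n, Measurable (Y n) := by
    intro n
    have : Y n = fun ω => g (X n ω) := funext fun ω => hYdef n ω
    rw [this]
    exact hg.comp (hXm n)
  have hYset : ∀ n y, {ω | Y n ω ≤ y} = {ω | g (X n ω) ≤ y} := by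
    intro n y; ext ω; simp [hYdef]
  have hYset2 : ∀ j k y, {ω | Y j ω ≤ y ∧ Y k ω ≤ y} =
      {ω | g (X j ω) ≤ y ∧ g (X k ω) ≤ y} := by
    intro j k y; ext ω; simp [hYdef]
  have marg : ∀ n y, (P {ω | Y n ω ≤ y}).toReal = FV y := by
    intro n y
    rw [hYset n y, hFV y]
    have hset : {ω | g (X n ω) ≤ y} = X n ⁻¹' {x | g x ≤ y} := rfl
    have h2 : P (X n ⁻¹' {x | g x ≤ y}) = (P.map (X n)) {x | g x ≤ y} :=
      (Measure.map_apply (hXm n) (hg measurableSet_Iic)).symm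
    rw [hset, h2, chain_marginal κ π hinv P X hXm hX0 hchain n]
  have hFVc : Continuous FV := FV_continuous π g FV fV hFV hfc hcdf
  set termFun : ℕ → ℝ → ℝ := fun k y =>
    (P {ω | Y 0 ω ≤ y ∧ Y (k + 1) ω ≤ y}).toReal -
      (P {ω | Y 0 ω ≤ y}).toReal * (P {ω | Y (k + 1) ω ≤ y}).toReal with htermdef
  have hbound : ∀ k y, ‖termFun k y‖ ≤ C * ((k + 1 : ℕ) : ℝ) ^ (-m) := by
    intro k y
    rw [Real.norm_eq_abs, htermdef]
    simp only
    rw [hYset2 0 (k+1) y, hYset 0 y, hYset (k+1) y]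
    exact term_bound κ π hinv P X hXm hX0 hchain m M hMm hM0 hMint hMb g hg y k
  have hcontterm : ∀ k, Continuous (termFun k) := by
    intro k
    have hJ : Continuous (fun y => (P {ω | Y 0 ω ≤ y ∧ Y (k + 1) ω ≤ y}).toReal) :=
      continuous_of_modulus hFVc
        (J_modulus P (Y 0) (Y (k+1)) (hYm 0) (hYm (k+1)) FV (marg 0) (marg (k+1)))
    have h1 : termFun k = fun y => (P {ω | Y 0 ω ≤ y ∧ Y (k + 1) ω ≤ y}).toReal -
        FV y * FV y := by
      funext y
      rw [htermdef]
      simp only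
      rw [marg 0 y, marg (k+1) y]
    rw [h1]
    exact hJ.sub (hFVc.mul hFVc)
  have hsum : Summable (fun k : ℕ => C * ((k + 1 : ℕ) : ℝ) ^ (-m)) := by
    have h1 : Summable (fun n : ℕ => (n : ℝ) ^ (-m)) :=
      Real.summable_nat_rpow.2 (by linarith)
    exact ((summable_nat_add_iff 1).2 h1).mul_left C
  have htsum : Continuous (fun y => ∑' k, termFun k y) :=
    continuous_tsum hcontterm hsum hbound
  have hform : sigmaSqFn P Y = fun y => (FV y - FV y ^ 2) + 2 * ∑' k, termFun k y := by
    funext y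
    rw [sigmaSqFn]
    have h3 : (∑' k : ℕ, ((P {ω | Y 0 ω ≤ y ∧ Y (k + 1) ω ≤ y}).toReal -
        (P {ω | Y 0 ω ≤ y}).toReal * (P {ω | Y (k + 1) ω ≤ y}).toReal)) =
        ∑' k, termFun k y := rfl
    rw [h3, marg 0 y]
  rw [hform]
  exact ((hFVc.sub (hFVc.pow 2)).add (continuous_const.mul htsum)).continuousAt
end

section
/- Let q(x) = (2/(π√3)) (1 + x²/3)^{−2} be the density of Student's t distribution with 3 degrees of freedom and f(x) = (3/8) (1 + x²/4)^{−5/2} the density of Student's t distribution with 4 degrees of freedom. Then for all x ∈ ℝ, q(x)/f(x) ≥ √9375/(32π); equivalently q(x) ≥ (√9375/(32π)) f(x) for all x ∈ ℝ. -/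
/- STATEMENT 15: The density of Student's t with 3 degrees of freedom dominates
√9375/(32π) times the density of Student's t with 4 degrees of freedom. -/

theorem t3_density_ratio_bound :
    ∀ x : ℝ,
      ((2 / (Real.pi * Real.sqrt 3)) * (1 + x ^ 2 / 3) ^ (-(2 : ℝ))) /
          ((3 / 8) * (1 + x ^ 2 / 4) ^ (-(5 / 2 : ℝ)))
        ≥ Real.sqrt 9375 / (32 * Real.pi) ∧
      (2 / (Real.pi * Real.sqrt 3)) * (1 + x ^ 2 / 3) ^ (-(2 : ℝ))
        ≥ (Real.sqrt 9375 / (32 * Real.pi)) *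
            ((3 / 8) * (1 + x ^ 2 / 4) ^ (-(5 / 2 : ℝ))) := by
  intro x
  have hpi : (0:ℝ) < Real.pi := Real.pi_pos
  have ha : (0:ℝ) < 1 + x ^ 2 / 3 := by positivity
  have hb : (0:ℝ) < 1 + x ^ 2 / 4 := by positivity
  set a := 1 + x ^ 2 / 3 with ha_def
  set b := 1 + x ^ 2 / 4 with hb_def
  have hsb : (0:ℝ) < Real.sqrt b := Real.sqrt_pos.mpr hb
  have hs3 : (0:ℝ) < Real.sqrt 3 := by positivity
  have hs5 : (0:ℝ) < Real.sqrt 5 := by positivity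
  have hA : a ^ (-(2:ℝ)) = 1 / a ^ 2 := by
    rw [Real.rpow_neg ha.le, one_div]
    norm_num [Real.rpow_natCast]
  have hB : b ^ (-(5/2:ℝ)) = 1 / (b ^ 2 * Real.sqrt b) := by
    rw [Real.rpow_neg hb.le, one_div]
    congr 1
    have : (5/2 : ℝ) = 2 + 1/2 := by norm_num
    rw [this, Real.rpow_add hb, ← Real.sqrt_eq_rpow,
      show (2:ℝ) = ((2:ℕ):ℝ) by norm_num, Real.rpow_natCast]
  -- key polynomial inequality
  have hpoly : 253125 * a ^ 4 ≤ 262144 * b ^ 5 := by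
    rw [ha_def, hb_def]
    nlinarith [sq_nonneg (x ^ 2 - 1), sq_nonneg (x * (x ^ 2 - 1)),
      sq_nonneg (x ^ 2 * (x ^ 2 - 1)), sq_nonneg (x ^ 3 * (x ^ 2 - 1))]
  -- key sqrt inequality: 225 √5 a² ≤ 512 b² √b
  have key : 225 * Real.sqrt 5 * a ^ 2 ≤ 512 * (b ^ 2 * Real.sqrt b) := by
    have h1 : Real.sqrt (253125 * a ^ 4) ≤ Real.sqrt (262144 * b ^ 5) :=
      Real.sqrt_le_sqrt hpoly
    have e1 : Real.sqrt (253125 * a ^ 4) = 225 * Real.sqrt 5 * a ^ 2 := by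
      rw [show (253125 : ℝ) * a ^ 4 = (225 * a ^ 2) ^ 2 * 5 by ring,
        Real.sqrt_mul (by positivity), Real.sqrt_sq (by positivity)]
      ring
    have e2 : Real.sqrt (262144 * b ^ 5) = 512 * (b ^ 2 * Real.sqrt b) := by
      rw [show (262144 : ℝ) * b ^ 5 = (512 * b ^ 2) ^ 2 * b by ring,
        Real.sqrt_mul (by positivity), Real.sqrt_sq (by positivity)]
      ring
    rw [e1, e2] at h1
    exact h1
  have h93 : Real.sqrt 9375 * Real.sqrt 3 = 75 * Real.sqrt 5 := by
    rw [← Real.sqrt_mul (by norm_num)]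
    rw [show (9375 : ℝ) * 3 = 75 ^ 2 * 5 by norm_num,
      Real.sqrt_mul (by positivity), Real.sqrt_sq (by norm_num)]
  have hf : (0:ℝ) < (3 / 8) * b ^ (-(5/2:ℝ)) := by
    rw [hB]; positivity
  have h2 : (2 / (Real.pi * Real.sqrt 3)) * a ^ (-(2:ℝ))
      ≥ (Real.sqrt 9375 / (32 * Real.pi)) * ((3 / 8) * b ^ (-(5/2:ℝ))) := by
    rw [hA, hB, ge_iff_le]
    rw [div_mul_div_comm, div_mul_div_comm, div_mul_div_comm,
      div_le_div_iff₀ (by positivity) (by positivity)]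
    have e : Real.sqrt 9375 * (3 * 1) * (Real.pi * Real.sqrt 3 * a ^ 2)
        = Real.pi * (225 * Real.sqrt 5 * a ^ 2) := by
      rw [show Real.sqrt 9375 * (3 * 1) * (Real.pi * Real.sqrt 3 * a ^ 2)
        = (Real.sqrt 9375 * Real.sqrt 3) * (3 * Real.pi * a ^ 2) from by ring, h93]
      ring
    nlinarith [mul_le_mul_of_nonneg_left key hpi.le, e]
  refine ⟨?_, h2⟩
  rw [ge_iff_le, le_div_iff₀ hf]
  linarith [h2]
end
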